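/- Let A be a measurable set. The following are equivalent: (i) A is a T-atom; (ii) A is T-convex with μ(A) > 0, and every T-convex set B with B ⊆ A a.e. satisfies μ(B) = 0 or B = A a.e.; (iii) A is T-admissible and T-irreducible; (iv) A is T-irreducible and every T-irreducible set A' with A ⊆ A' a.e. satisfies A' = A a.e. -/

import Mathlib

open MeasureTheory ENNReal Filter Set

noncomputable section

namespace PaperAtoms

variable {Ω : Type*} [MeasurableSpace Ω] {μ : MeasureTheory.Measure Ω} {p : ℝ≥0∞} [Fact (1 ≤ p)]

/-- `T` is a positive operator on `Lp`. -/
def IsPositiveOp (T : Lp ℝ p μ →L[ℝ] Lp ℝ p μ) : Prop :=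
  ∀ f : Lp ℝ p μ, 0 ≤ f → 0 ≤ T f

/-- A measurable set `A` is `T`-invariant if `T f` vanishes a.e. on `Aᶜ` for every
nonnegative `f ∈ Lp` vanishing a.e. on `Aᶜ`. -/
def Invariant (T : Lp ℝ p μ →L[ℝ] Lp ℝ p μ) (A : Set Ω) : Prop :=
  MeasurableSet A ∧
    ∀ f : Lp ℝ p μ, 0 ≤ f → (∀ᵐ x ∂μ, x ∉ A → f x = 0) → ∀ᵐ x ∂μ, x ∉ A → T f x = 0

/-- `A` is `T`-co-invariant if `Aᶜ` is `T`-invariant. -/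
def CoInvariant (T : Lp ℝ p μ →L[ℝ] Lp ℝ p μ) (A : Set Ω) : Prop :=
  Invariant T Aᶜ

/-- `A` is `T`-admissible if it belongs to the σ-field generated by the `T`-invariant sets. -/
def Admissible (T : Lp ℝ p μ →L[ℝ] Lp ℝ p μ) (A : Set Ω) : Prop :=
  MeasurableSet[MeasurableSpace.generateFrom {B : Set Ω | Invariant T B}] A

/-- A `T`-atom is a minimal `T`-admissible set with positive measure. -/
def Atom (T : Lp ℝ p μ →L[ℝ] Lp ℝ p μ) (A : Set Ω) : Prop :=
  Admissible T A ∧ 0 < μ A ∧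
    ∀ B : Set Ω, Admissible T B → B ≤ᵐ[μ] A → μ B = 0 ∨ B =ᵐ[μ] A

/-- `FA` is (a version of) the future of `A`: the minimal `T`-invariant set containing `A` a.e. -/
def IsFuture (T : Lp ℝ p μ →L[ℝ] Lp ℝ p μ) (A FA : Set Ω) : Prop :=
  Invariant T FA ∧ A ≤ᵐ[μ] FA ∧
    ∀ B : Set Ω, Invariant T B → A ≤ᵐ[μ] B → FA ≤ᵐ[μ] B

/-- `PA` is (a version of) the past of `A`: the minimal `T`-co-invariant set containing `A` a.e. -/
def IsPast (T : Lp ℝ p μ →L[ℝ] Lp ℝ p μ) (A PA : Set Ω) : Prop :=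
  CoInvariant T PA ∧ A ≤ᵐ[μ] PA ∧
    ∀ B : Set Ω, CoInvariant T B → A ≤ᵐ[μ] B → PA ≤ᵐ[μ] B

/-- `A` is `T`-convex if `A = F(A) ∩ P(A)` a.e. -/
def Convexe (T : Lp ℝ p μ →L[ℝ] Lp ℝ p μ) (A : Set Ω) : Prop :=
  MeasurableSet A ∧
    ∃ FA PA : Set Ω, IsFuture T A FA ∧ IsPast T A PA ∧ A =ᵐ[μ] (FA ∩ PA : Set Ω)

/-- Multiplication by the indicator function of `A`, as a bounded operator on `Lp`
(defined as `0` if `A` is not measurable). -/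
def indicatorCLM (μ : MeasureTheory.Measure Ω) (p : ℝ≥0∞) [Fact (1 ≤ p)] (A : Set Ω) :
    Lp ℝ p μ →L[ℝ] Lp ℝ p μ := by
  classical
  exact if hA : MeasurableSet A then
    LinearMap.mkContinuous
      { toFun := fun f => ((Lp.memLp f).indicator hA).toLp (A.indicator f)
        map_add' := fun f g => by
          rw [← MemLp.toLp_add]
          refine MemLp.toLp_congr _ _ ?_
          filter_upwards [Lp.coeFn_add f g] with x hx
          simp only [Pi.add_apply, Set.indicator_apply, hx]
          split <;> simp
        map_smul' := fun c f => by
          rw [RingHom.id_apply, ← MemLp.toLp_const_smul]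
          refine MemLp.toLp_congr _ _ ?_
          filter_upwards [Lp.coeFn_smul c f] with x hx
          simp only [Pi.smul_apply, Set.indicator_apply, hx, smul_eq_mul]
          split <;> simp }
      1
      (fun f => by
        simp only [LinearMap.coe_mk, AddHom.coe_mk, one_mul]
        rw [Lp.norm_toLp, Lp.norm_def]
        exact ENNReal.toReal_mono (Lp.eLpNorm_ne_top f) (eLpNorm_indicator_le _))
  else 0

/-- The restriction `T_A = 1_A T 1_A` of `T` to a measurable set `A`. -/
def restrictOp (T : Lp ℝ p μ →L[ℝ] Lp ℝ p μ) (A : Set Ω) : Lp ℝ p μ →L[ℝ] Lp ℝ p μ :=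
  (indicatorCLM μ p A).comp (T.comp (indicatorCLM μ p A))

/-- The spectral radius of a bounded operator, via Gelfand's formula
`ρ(T) = inf_n ‖Tⁿ‖^(1/n) = lim_n ‖Tⁿ‖^(1/n)`. -/
def specRadius (T : Lp ℝ p μ →L[ℝ] Lp ℝ p μ) : ℝ :=
  ⨅ n : ℕ, ‖T ^ (n + 1)‖ ^ (((n : ℝ) + 1)⁻¹)

/-- The spectral radius `ρ(A)` of the restriction of `T` to `A`. -/
def rhoSet (T : Lp ℝ p μ →L[ℝ] Lp ℝ p μ) (A : Set Ω) : ℝ :=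
  specRadius (restrictOp T A)

/-- A measurable set `A` with `μ A > 0` is `T`-irreducible if the restriction of `T` to `A`
is irreducible, i.e. every `T_A`-invariant subset of `A` is a.e. trivial. -/
def Irreducible (T : Lp ℝ p μ →L[ℝ] Lp ℝ p μ) (A : Set Ω) : Prop :=
  MeasurableSet A ∧ 0 < μ A ∧
    ∀ B : Set Ω, Invariant (restrictOp T A) B → B ≤ᵐ[μ] A → μ B = 0 ∨ B =ᵐ[μ] A

/-- `T` is power compact if some power `T^k`, `k ≥ 1`, is a compact operator. -/
def PowerCompact (T : Lp ℝ p μ →L[ℝ] Lp ℝ p μ) : Prop :=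
  ∃ k : ℕ, 1 ≤ k ∧ IsCompactOperator (⇑(T ^ k))

/-- `B ≼ A` for atoms: `B ⊆ F(A)` a.e. -/
def Prec (T : Lp ℝ p μ →L[ℝ] Lp ℝ p μ) (B A : Set Ω) : Prop :=
  ∃ FA : Set Ω, IsFuture T A FA ∧ B ≤ᵐ[μ] FA

/-- `B ≺ A` for atoms: `B ⊆ F(A)` a.e. and `B ≠ A` a.e. -/
def PrecStrict (T : Lp ℝ p μ →L[ℝ] Lp ℝ p μ) (B A : Set Ω) : Prop :=
  Prec T B A ∧ ¬ (B =ᵐ[μ] A)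

/-- A critical atom: a `T`-atom whose spectral radius equals that of `T`. -/
def CriticalAtom (T : Lp ℝ p μ →L[ℝ] Lp ℝ p μ) (A : Set Ω) : Prop :=
  Atom T A ∧ rhoSet T A = specRadius T

/-- There is a chain `A = A_0 ≻ A_1 ≻ ⋯ ≻ A_n` of critical atoms starting at `A`. -/
def ChainFrom (T : Lp ℝ p μ →L[ℝ] Lp ℝ p μ) (A : Set Ω) (n : ℕ) : Prop :=
  ∃ c : ℕ → Set Ω, c 0 = A ∧ (∀ i ≤ n, CriticalAtom T (c i)) ∧
    ∀ i < n, PrecStrict T (c (i + 1)) (c i)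

/-- The generalized eigenspace `⋃ₖ ker (T - λ id)^k` of `T` at `λ`. -/
def genEigenspace (T : Lp ℝ p μ →L[ℝ] Lp ℝ p μ) (l : ℝ) : Submodule ℝ (Lp ℝ p μ) :=
  ⨆ k : ℕ, LinearMap.ker ((((T - l • (1 : Lp ℝ p μ →L[ℝ] Lp ℝ p μ)) ^ k : Lp ℝ p μ →L[ℝ] Lp ℝ p μ)) : Lp ℝ p μ →ₗ[ℝ] Lp ℝ p μ)

/-- The algebraic multiplicity of `λ` for `T`. -/
def algMult (T : Lp ℝ p μ →L[ℝ] Lp ℝ p μ) (l : ℝ) : ℕ :=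
  Module.finrank ℝ ↥(genEigenspace T l)

/-- The set of `k` at which the kernels of `(T - ρ(T) id)^k` stabilize; the ascent of `T`
at `ρ(T)` is its infimum. -/
def ascentSet (T : Lp ℝ p μ →L[ℝ] Lp ℝ p μ) : Set ℕ :=
  {k : ℕ | LinearMap.ker ((((T - specRadius T • (1 : Lp ℝ p μ →L[ℝ] Lp ℝ p μ)) ^ k : Lp ℝ p μ →L[ℝ] Lp ℝ p μ)) : Lp ℝ p μ →ₗ[ℝ] Lp ℝ p μ)
      = LinearMap.ker ((((T - specRadius T • (1 : Lp ℝ p μ →L[ℝ] Lp ℝ p μ)) ^ (k + 1) : Lp ℝ p μ →L[ℝ] Lp ℝ p μ)) : Lp ℝ p μ →ₗ[ℝ] Lp ℝ p μ)}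

/-- `D` is (a version of) the set `T(C)`, i.e. the support of `T(1_C f)` for any a.e.
positive `f ∈ Lp`. -/
def IsImage (T : Lp ℝ p μ →L[ℝ] Lp ℝ p μ) (C D : Set Ω) : Prop :=
  MeasurableSet C ∧ MeasurableSet D ∧
    ∀ f : Lp ℝ p μ, (∀ᵐ x ∂μ, 0 < f x) →
      D =ᵐ[μ] ({x | T (indicatorCLM μ p C f) x ≠ 0} : Set Ω)

/-- `D` is (a version of) the `k`-fold iterated image `T^k(C)`. -/
def IsIterImage (T : Lp ℝ p μ →L[ℝ] Lp ℝ p μ) : ℕ → Set Ω → Set Ω → Prop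
  | 0, C, D => D = C
  | (k + 1), C, D => ∃ E : Set Ω, IsIterImage T k C E ∧ IsImage T E D

variable {Ω : Type*} [MeasurableSpace Ω] {μ : MeasureTheory.Measure Ω} {p : ℝ≥0∞}

section AuxLemmas

open Topology

variable [Fact (1 ≤ p)] {T : Lp ℝ p μ →L[ℝ] Lp ℝ p μ}

lemma indicatorCLM_coeFn {A : Set Ω} (hA : MeasurableSet A) (f : Lp ℝ p μ) :
    ⇑(indicatorCLM μ p A f) =ᵐ[μ] A.indicator ⇑f := by
  unfold indicatorCLM
  rw [dif_pos hA, LinearMap.mkContinuous_apply]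
  simp only [LinearMap.coe_mk, AddHom.coe_mk]
  exact MemLp.coeFn_toLp _

lemma indicatorCLM_nonneg {A : Set Ω} (hA : MeasurableSet A) {f : Lp ℝ p μ} (hf : 0 ≤ f) :
    0 ≤ indicatorCLM μ p A f := by
  classical
  rw [← Lp.coeFn_nonneg] at hf ⊢
  filter_upwards [hf, indicatorCLM_coeFn hA f] with x hx h
  simp only [Pi.zero_apply] at hx ⊢
  rw [h, Set.indicator_apply]
  split <;> simp [hx]

lemma indicatorCLM_vanish {A : Set Ω} (hA : MeasurableSet A) (f : Lp ℝ p μ) :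
    ∀ᵐ x ∂μ, x ∉ A → indicatorCLM μ p A f x = 0 := by
  filter_upwards [indicatorCLM_coeFn hA f] with x h hx
  rw [h, Set.indicator_of_notMem hx]

lemma indicatorCLM_of_supported {A : Set Ω} (hA : MeasurableSet A) {f : Lp ℝ p μ}
    (h : ∀ᵐ x ∂μ, x ∉ A → f x = 0) : indicatorCLM μ p A f = f := by
  classical
  refine Lp.ext ?_
  filter_upwards [indicatorCLM_coeFn hA f, h] with x hx hx0
  rw [hx, Set.indicator_apply]
  by_cases hxa : x ∈ A
  · simp [hxa]
  · simp [hxa, hx0 hxa]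

lemma sub_indicatorCLM_coeFn {S : Set Ω} (hS : MeasurableSet S) (f : Lp ℝ p μ) :
    ⇑(f - indicatorCLM μ p S f) =ᵐ[μ] Sᶜ.indicator ⇑f := by
  classical
  filter_upwards [Lp.coeFn_sub f (indicatorCLM μ p S f), indicatorCLM_coeFn hS f] with x h1 h2
  rw [h1, Pi.sub_apply, h2]
  by_cases hx : x ∈ S <;> simp [Set.indicator_apply, hx]

lemma sub_indicatorCLM_nonneg {S : Set Ω} (hS : MeasurableSet S) {f : Lp ℝ p μ} (hf : 0 ≤ f) :
    0 ≤ f - indicatorCLM μ p S f := by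
  classical
  rw [← Lp.coeFn_nonneg] at hf ⊢
  filter_upwards [hf, sub_indicatorCLM_coeFn hS f] with x hx h
  simp only [Pi.zero_apply] at hx ⊢
  rw [h, Set.indicator_apply]
  split <;> simp [hx]

lemma vanish_mono {g : Lp ℝ p μ} {S S' : Set Ω} (hS : S ≤ᵐ[μ] S')
    (hg : ∀ᵐ x ∂μ, x ∉ S → g x = 0) : ∀ᵐ x ∂μ, x ∉ S' → g x = 0 := by
  filter_upwards [hg, hS] with x h1 h2 hx
  exact h1 fun h => hx (h2 h)

lemma vanish_subset {g : Lp ℝ p μ} {S S' : Set Ω} (hS : S ⊆ S')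
    (hg : ∀ᵐ x ∂μ, x ∉ S → g x = 0) : ∀ᵐ x ∂μ, x ∉ S' → g x = 0 := by
  filter_upwards [hg] with x h1 hx
  exact h1 fun h => hx (hS h)

lemma vanish_add {g h : Lp ℝ p μ} {S : Set Ω}
    (hg : ∀ᵐ x ∂μ, x ∉ S → g x = 0) (hh : ∀ᵐ x ∂μ, x ∉ S → h x = 0) :
    ∀ᵐ x ∂μ, x ∉ S → (g + h) x = 0 := by
  filter_upwards [hg, hh, Lp.coeFn_add g h] with x h1 h2 h3 hx
  rw [h3, Pi.add_apply, h1 hx, h2 hx, add_zero]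

lemma restrictOp_coeFn (T : Lp ℝ p μ →L[ℝ] Lp ℝ p μ) {A : Set Ω} (hA : MeasurableSet A)
    (f : Lp ℝ p μ) :
    ⇑(restrictOp T A f) =ᵐ[μ] A.indicator ⇑(T (indicatorCLM μ p A f)) := by
  simpa [restrictOp] using indicatorCLM_coeFn hA (T (indicatorCLM μ p A f))

lemma Invariant.congr_ae {B B' : Set Ω} (hB : Invariant T B) (hB' : MeasurableSet B')
    (h : B =ᵐ[μ] B') : Invariant T B' := by
  have hiff := Filter.eventuallyEq_set.1 h
  refine ⟨hB', fun f hf hsupp => ?_⟩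
  have h1 : ∀ᵐ x ∂μ, x ∉ B → f x = 0 := by
    filter_upwards [hsupp, hiff] with x h1 h2 hx
    exact h1 fun hmem => hx (h2.2 hmem)
  filter_upwards [hB.2 f hf h1, hiff] with x h2 h3 hx
  exact h2 fun hmem => hx (h3.1 hmem)

lemma Invariant.inter {B C : Set Ω} (hB : Invariant T B) (hC : Invariant T C) :
    Invariant T (B ∩ C) := by
  refine ⟨hB.1.inter hC.1, fun f hf hsupp => ?_⟩
  have hsB : ∀ᵐ x ∂μ, x ∉ B → f x = 0 := vanish_subset Set.inter_subset_left hsupp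
  have hsC : ∀ᵐ x ∂μ, x ∉ C → f x = 0 := vanish_subset Set.inter_subset_right hsupp
  filter_upwards [hB.2 f hf hsB, hC.2 f hf hsC] with x h1 h2 hx
  by_cases hxB : x ∈ B
  · exact h2 fun hxC => hx ⟨hxB, hxC⟩
  · exact h1 hxB

lemma invariant_univ (T : Lp ℝ p μ →L[ℝ] Lp ℝ p μ) : Invariant T (Set.univ : Set Ω) :=
  ⟨MeasurableSet.univ, fun f _ _ => by
    filter_upwards with x hx
    exact absurd (Set.mem_univ x) hx⟩

lemma invariant_of_null {B : Set Ω} (hB : MeasurableSet B) (h : μ B = 0) : Invariant T B := by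
  refine ⟨hB, fun f hf hsupp => ?_⟩
  have hBc : ∀ᵐ x ∂μ, x ∉ B := by
    rw [ae_iff]
    simpa using h
  have hf0 : f = 0 := Lp.ext (by
    filter_upwards [hsupp, hBc, Lp.coeFn_zero ℝ p μ] with x h1 h2 h3
    rw [h3]
    simpa using h1 h2)
  rw [hf0, map_zero]
  filter_upwards [Lp.coeFn_zero ℝ p μ] with x hx _
  simpa using hx

lemma invariant_of_compl_null {B : Set Ω} (hB : MeasurableSet B) (h : μ Bᶜ = 0) :
    Invariant T B := by
  refine ⟨hB, fun f hf hsupp => ?_⟩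
  have hBc : ∀ᵐ x ∂μ, x ∈ B := by
    rw [ae_iff]
    exact h
  filter_upwards [hBc] with x h1 hx
  exact absurd h1 hx

lemma Invariant.iInter {s : ℕ → Set Ω} (hs : ∀ n, Invariant T (s n)) :
    Invariant T (⋂ n, s n) := by
  refine ⟨MeasurableSet.iInter fun n => (hs n).1, fun f hf hsupp => ?_⟩
  have h : ∀ n, ∀ᵐ x ∂μ, x ∉ s n → T f x = 0 := fun n =>
    (hs n).2 f hf (vanish_subset (Set.iInter_subset s n) hsupp)
  rw [← ae_all_iff] at h
  filter_upwards [h] with x hx hmem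
  obtain ⟨n, hn⟩ : ∃ n, x ∉ s n := by simpa [Set.mem_iInter] using hmem
  exact hx n hn

lemma exists_split {S₁ S₂ : Set Ω} (hS₁ : MeasurableSet S₁) {f : Lp ℝ p μ} (hf : 0 ≤ f)
    (hsupp : ∀ᵐ x ∂μ, x ∉ S₁ ∪ S₂ → f x = 0) :
    ∃ g h : Lp ℝ p μ, f = g + h ∧ 0 ≤ g ∧ 0 ≤ h ∧
      (∀ᵐ x ∂μ, x ∉ S₁ → g x = 0) ∧ (∀ᵐ x ∂μ, x ∉ S₂ \ S₁ → h x = 0) := by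
  classical
  refine ⟨indicatorCLM μ p S₁ f, f - indicatorCLM μ p S₁ f, by abel, indicatorCLM_nonneg hS₁ hf,
    sub_indicatorCLM_nonneg hS₁ hf, indicatorCLM_vanish hS₁ f, ?_⟩
  filter_upwards [sub_indicatorCLM_coeFn hS₁ f, hsupp] with x h1 h2 hx
  rw [h1, Set.indicator_apply]
  by_cases hxs : x ∈ S₁
  · simp [hxs]
  · simp only [Set.mem_compl_iff, hxs, not_false_iff, if_pos]
    exact h2 fun hmem => hmem.elim hxs fun h2' => hx ⟨h2', hxs⟩

lemma vanish_of_union {S₁ S₂ U : Set Ω} (hS₁ : MeasurableSet S₁) {f : Lp ℝ p μ} (hf : 0 ≤ f)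
    (hsupp : ∀ᵐ x ∂μ, x ∉ S₁ ∪ S₂ → f x = 0)
    (H₁ : ∀ g : Lp ℝ p μ, 0 ≤ g → (∀ᵐ x ∂μ, x ∉ S₁ → g x = 0) → ∀ᵐ x ∂μ, x ∉ U → T g x = 0)
    (H₂ : ∀ g : Lp ℝ p μ, 0 ≤ g → (∀ᵐ x ∂μ, x ∉ S₂ \ S₁ → g x = 0) →
      ∀ᵐ x ∂μ, x ∉ U → T g x = 0) :
    ∀ᵐ x ∂μ, x ∉ U → T f x = 0 := by
  obtain ⟨g, h, rfl, hg0, hh0, hgs, hhs⟩ := exists_split hS₁ hf hsupp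
  rw [map_add]
  exact vanish_add (H₁ g hg0 hgs) (H₂ h hh0 hhs)

lemma Admissible.measurableSet {A : Set Ω} (hA : Admissible T A) : MeasurableSet A :=
  MeasurableSpace.generateFrom_le (fun _ hB => hB.1) _ hA

lemma Invariant.admissible {B : Set Ω} (hB : Invariant T B) : Admissible T B :=
  MeasurableSpace.measurableSet_generateFrom hB

lemma CoInvariant.admissible {B : Set Ω} (hB : CoInvariant T B) : Admissible T B := by
  have := (Invariant.admissible hB).compl
  rwa [compl_compl] at this

lemma admissible_congr {A A' : Set Ω} (hA : Admissible T A) (hA' : MeasurableSet A')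
    (h : A =ᵐ[μ] A') : Admissible T A' := by
  have hd1 : μ (A \ A') = 0 := (ae_le_set.1 h.le)
  have hd2 : μ (A' \ A) = 0 := (ae_le_set.1 h.symm.le)
  have h1 : Admissible T (A' \ A) :=
    (invariant_of_null (T := T) (hA'.diff hA.measurableSet) hd2).admissible
  have h2 : Admissible T (A \ A') :=
    (invariant_of_null (T := T) (hA.measurableSet.diff hA') hd1).admissible
  have hset : A' = (A \ (A \ A')) ∪ (A' \ A) := by
    ext x
    by_cases hx : x ∈ A <;> by_cases hx' : x ∈ A' <;> simp [hx, hx']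
  rw [hset]
  exact (hA.diff h2).union h1

lemma not_split_of_invariant {K : Set Ω}
    (h : ∀ B : Set Ω, Invariant T B → μ (K ∩ B) = 0 ∨ K ≤ᵐ[μ] B) :
    ∀ D : Set Ω, Admissible T D → μ (K ∩ D) = 0 ∨ K ≤ᵐ[μ] D := by
  intro D hD
  refine MeasurableSpace.generateFrom_induction
    (p := fun s _ => μ (K ∩ s) = 0 ∨ K ≤ᵐ[μ] s) _ (fun t ht _ => h t ht) ?_ ?_ ?_ D hD
  · left; simp
  · rintro t _ (h1 | h2)
    · right
      rw [ae_le_set, Set.diff_compl]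
      exact h1
    · left
      rw [← Set.diff_eq]
      exact ae_le_set.1 h2
  · rintro s _ hs
    by_cases hex : ∃ n, K ≤ᵐ[μ] s n
    · obtain ⟨n, hn⟩ := hex
      exact Or.inr (hn.trans (HasSubset.Subset.eventuallyLE (Set.subset_iUnion s n)))
    · push_neg at hex
      left
      rw [Set.inter_iUnion]
      refine measure_iUnion_null fun n => ?_
      rcases hs n with h1 | h2
      · exact h1
      · exact absurd h2 (hex n)

lemma tendsto_eLpNorm_indicator_compl (hp' : p ≠ ∞) {R : ℕ → Set Ω}
    (hR : ∀ n, MeasurableSet (R n)) (hmono : Monotone R) (f : Lp ℝ p μ)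
    (hsupp : ∀ᵐ x ∂μ, x ∉ ⋃ n, R n → f x = 0) :
    Tendsto (fun n => eLpNorm ((R n)ᶜ.indicator ⇑f) p μ) atTop (𝓝 0) := by
  classical
  have hp0 : p ≠ 0 := (lt_of_lt_of_le zero_lt_one (Fact.out : 1 ≤ p)).ne'
  have hc : 0 < p.toReal := ENNReal.toReal_pos hp0 hp'
  have heq : ∀ n, eLpNorm ((R n)ᶜ.indicator ⇑f) p μ
      = (∫⁻ x, (R n)ᶜ.indicator (fun x => (‖f x‖₊ : ℝ≥0∞) ^ p.toReal) x ∂μ) ^ (1 / p.toReal) := by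
    intro n
    rw [eLpNorm_eq_lintegral_rpow_enorm_toReal hp0 hp']
    congr 1
    refine lintegral_congr fun x => ?_
    by_cases hx : x ∈ (R n)ᶜ <;>
      simp [Set.indicator_apply, hx, ENNReal.zero_rpow_of_pos hc, enorm_eq_nnnorm]
  have hm : AEMeasurable (fun x => (‖f x‖₊ : ℝ≥0∞) ^ p.toReal) μ :=
    ENNReal.continuous_rpow_const.measurable.comp_aemeasurable
      (Lp.aestronglyMeasurable f).enorm
  have hlim : Tendsto
      (fun n => ∫⁻ x, (R n)ᶜ.indicator (fun x => (‖f x‖₊ : ℝ≥0∞) ^ p.toReal) x ∂μ)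
      atTop (𝓝 0) := by
    have h0 : (0 : ℝ≥0∞) = ∫⁻ _ : Ω, (0 : ℝ≥0∞) ∂μ := by simp
    rw [h0]
    refine tendsto_lintegral_of_dominated_convergence'
      (fun x => (‖f x‖₊ : ℝ≥0∞) ^ p.toReal)
      (fun n => hm.indicator (hR n).compl) (fun n => ?_) ?_ ?_
    · filter_upwards with x
      by_cases hx : x ∈ (R n)ᶜ <;> simp [Set.indicator_apply, hx]
    · exact ((eLpNorm_lt_top_iff_lintegral_rpow_enorm_lt_top hp0 hp').1
        (Lp.eLpNorm_lt_top f)).ne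
    · filter_upwards [hsupp] with x hx
      by_cases hfx : (∀ n, x ∉ R n)
      · have hfx0 : f x = 0 := hx (by simpa [Set.mem_iUnion] using hfx)
        have : ∀ n, (R n)ᶜ.indicator (fun x => (‖f x‖₊ : ℝ≥0∞) ^ p.toReal) x = 0 := by
          intro n
          by_cases hx' : x ∈ (R n)ᶜ <;>
            simp [Set.indicator_apply, hx', hfx0, ENNReal.zero_rpow_of_pos hc]
        simp only [this]
        exact tendsto_const_nhds
      · push_neg at hfx
        obtain ⟨m, hm'⟩ := hfx
        refine tendsto_atTop_of_eventually_const (i₀ := m) fun n hn => ?_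
        have hmem : x ∈ R n := hmono hn hm'
        simp [Set.indicator_apply, hmem]
  have := (ENNReal.continuous_rpow_const (y := 1 / p.toReal)).tendsto 0 |>.comp hlim
  rw [ENNReal.zero_rpow_of_pos (by positivity)] at this
  exact this.congr fun n => (heq n).symm

lemma Invariant.iUnion (hp' : p ≠ ∞) {s : ℕ → Set Ω} (hs : ∀ n, Invariant T (s n)) :
    Invariant T (⋃ n, s n) := by
  classical
  set U := ⋃ n, s n with hU
  let R : ℕ → Set Ω := fun n => Nat.rec (s 0) (fun k Rk => Rk ∪ s (k + 1)) n
  have hRsucc : ∀ k, R (k + 1) = R k ∪ s (k + 1) := fun k => rfl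
  have hRmeas : ∀ n, MeasurableSet (R n) := by
    intro n
    induction n with
    | zero => exact (hs 0).1
    | succ k ih => exact ih.union (hs (k + 1)).1
  have hRmono : Monotone R :=
    monotone_nat_of_le_succ fun n => by rw [hRsucc]; exact Set.subset_union_left
  have hsub : ∀ n, s n ⊆ R n := by
    intro n
    cases n with
    | zero => exact subset_rfl
    | succ k => rw [hRsucc]; exact Set.subset_union_right
  have hRU : ∀ n, R n ⊆ U := by
    intro n
    induction n with
    | zero => exact Set.subset_iUnion s 0
    | succ k ih => rw [hRsucc]; exact Set.union_subset ih (Set.subset_iUnion s (k + 1))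
  have hUR : U = ⋃ n, R n :=
    subset_antisymm (Set.iUnion_subset fun n => (hsub n).trans (Set.subset_iUnion R n))
      (Set.iUnion_subset hRU)
  have key : ∀ n, ∀ g : Lp ℝ p μ, 0 ≤ g → (∀ᵐ x ∂μ, x ∉ R n → g x = 0) →
      ∀ᵐ x ∂μ, x ∉ U → T g x = 0 := by
    intro n
    induction n with
    | zero =>
      intro g hg hgs
      exact vanish_subset (Set.subset_iUnion s 0) ((hs 0).2 g hg hgs)
    | succ k ih =>
      intro g hg hgs
      rw [hRsucc] at hgs
      refine vanish_of_union (hRmeas k) hg hgs ih fun h hh0 hhs => ?_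
      exact vanish_subset (Set.subset_iUnion s (k + 1))
        ((hs (k + 1)).2 h hh0 (vanish_subset Set.diff_subset hhs))
  refine ⟨MeasurableSet.iUnion fun n => (hs n).1, fun f hf hsupp => ?_⟩
  set fn : ℕ → Lp ℝ p μ := fun n => indicatorCLM μ p (R n) f with hfn
  have hfsupp' : ∀ᵐ x ∂μ, x ∉ ⋃ n, R n → f x = 0 := by rw [← hUR]; exact hsupp
  have hconv := tendsto_eLpNorm_indicator_compl hp' hRmeas hRmono f hfsupp'
  have heq : ∀ n, eLpNorm (⇑(f - fn n)) p μ = eLpNorm ((R n)ᶜ.indicator ⇑f) p μ :=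
    fun n => eLpNorm_congr_ae (sub_indicatorCLM_coeFn (hRmeas n) f)
  have hconv2 : Tendsto (fun n => eLpNorm (⇑(f - fn n)) p μ) atTop (𝓝 0) := by
    rw [show (fun n => eLpNorm (⇑(f - fn n)) p μ)
      = fun n => eLpNorm ((R n)ᶜ.indicator ⇑f) p μ from funext heq]
    exact hconv
  have hnorm : Tendsto (fun n => ‖f - fn n‖) atTop (𝓝 0) := by
    have h1 := (ENNReal.tendsto_toReal (a := 0) (by simp)).comp hconv2
    simpa [Lp.norm_def, Function.comp_def] using h1
  have htend : Tendsto fn atTop (𝓝 f) := by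
    rw [tendsto_iff_norm_sub_tendsto_zero]
    simpa [norm_sub_rev] using hnorm
  have hTtend : Tendsto (fun n => T (fn n)) atTop (𝓝 (T f)) :=
    (T.continuous.tendsto f).comp htend
  have hTnorm : Tendsto (fun n => eLpNorm (⇑(T (fn n)) - ⇑(T f)) p μ) atTop (𝓝 0) := by
    have h1 : Tendsto (fun n => ‖T (fn n) - T f‖) atTop (𝓝 0) :=
      tendsto_iff_norm_sub_tendsto_zero.1 hTtend
    have h2 := (ENNReal.tendsto_ofReal (a := 0) h1)
    rw [ENNReal.ofReal_zero] at h2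
    refine h2.congr fun n => ?_
    rw [Lp.norm_def, ENNReal.ofReal_toReal (Lp.eLpNorm_ne_top _)]
    exact eLpNorm_congr_ae (Lp.coeFn_sub _ _)
  have hp0 : p ≠ 0 := (lt_of_lt_of_le zero_lt_one (Fact.out : 1 ≤ p)).ne'
  have hinm := tendstoInMeasure_of_tendsto_eLpNorm hp0
    (fun n => Lp.aestronglyMeasurable (T (fn n))) (Lp.aestronglyMeasurable (T f)) hTnorm
  obtain ⟨ns, -, hns⟩ := hinm.exists_seq_tendsto_ae
  have hvanish : ∀ n, ∀ᵐ x ∂μ, x ∉ U → T (fn n) x = 0 := fun n =>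
    key n (fn n) (indicatorCLM_nonneg (hRmeas n) hf) (indicatorCLM_vanish (hRmeas n) f)
  rw [← ae_all_iff] at hvanish
  filter_upwards [hvanish, hns] with x hx htx hxU
  have hzero : ∀ i, T (fn (ns i)) x = 0 := fun i => hx (ns i) hxU
  have h1 : Tendsto (fun i => T (fn (ns i)) x) atTop (𝓝 (T f x)) := htx
  rw [show (fun i => T (fn (ns i)) x) = fun _ => (0 : ℝ) from funext hzero] at h1
  exact tendsto_nhds_unique h1 tendsto_const_nhds

lemma exists_minimal_superset [SigmaFinite μ] (P : Set Ω → Prop) (A : Set Ω)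
    (hmeas : ∀ B, P B → MeasurableSet B)
    (hinter : ∀ s : ℕ → Set Ω, (∀ n, P (s n)) → P (⋂ n, s n))
    (hex : ∃ B, P B ∧ A ≤ᵐ[μ] B) :
    ∃ M, P M ∧ A ≤ᵐ[μ] M ∧ ∀ B, P B → A ≤ᵐ[μ] B → M ≤ᵐ[μ] B := by
  classical
  obtain ⟨ν, hν, hμν, hνμ⟩ := exists_isFiniteMeasure_absolutelyContinuous μ
  set c := sInf ((fun B => ν B) '' {B | P B ∧ A ≤ᵐ[μ] B}) with hc
  obtain ⟨B₀, hB₀⟩ := hex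
  have hcle : c ≤ ν B₀ := sInf_le ⟨B₀, hB₀, rfl⟩
  have hcnetop : c ≠ ∞ := (lt_of_le_of_lt hcle (measure_lt_top ν B₀)).ne
  have hlt : ∀ n : ℕ, ∃ B : Set Ω, (P B ∧ A ≤ᵐ[μ] B) ∧ ν B < c + ((n : ℝ≥0∞) + 1)⁻¹ := by
    intro n
    have hlt' : c < c + ((n : ℝ≥0∞) + 1)⁻¹ :=
      ENNReal.lt_add_right hcnetop (by simp)
    obtain ⟨b, ⟨B, hB, rfl⟩, hb⟩ := sInf_lt_iff.1 (lt_of_le_of_lt (le_refl c) hlt')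
    exact ⟨B, hB, hb⟩
  choose s hs1 hs2 using hlt
  set M := ⋂ n, s n with hM
  have hPM : P M := hinter s fun n => (hs1 n).1
  have hAM : A ≤ᵐ[μ] M := by
    have h1 : ∀ᵐ x ∂μ, ∀ n, x ∈ A → x ∈ s n := ae_all_iff.2 fun n => (hs1 n).2
    exact h1.mono fun x hx hxA => Set.mem_iInter.2 fun n => hx n hxA
  have hcM : c ≤ ν M := sInf_le ⟨M, ⟨hPM, hAM⟩, rfl⟩
  have hMc : ν M ≤ c := by
    refine ENNReal.le_of_forall_pos_le_add fun ε hε _ => ?_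
    obtain ⟨n, hn⟩ := ENNReal.exists_inv_nat_lt
      (a := (ε : ℝ≥0∞)) (by exact_mod_cast hε.ne')
    have h2 : ((n : ℝ≥0∞) + 1)⁻¹ ≤ ((n : ℝ≥0∞))⁻¹ :=
      ENNReal.inv_le_inv.2 (le_add_of_nonneg_right zero_le_one)
    calc ν M ≤ ν (s n) := measure_mono (Set.iInter_subset s n)
      _ ≤ c + ((n : ℝ≥0∞) + 1)⁻¹ := (hs2 n).le
      _ ≤ c + ((n : ℝ≥0∞))⁻¹ := by gcongr
      _ ≤ c + ε := add_le_add le_rfl hn.le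
  have hνM : ν M = c := le_antisymm hMc hcM
  refine ⟨M, hPM, hAM, fun B hPB hAB => ?_⟩
  have hMB : P (M ∩ B) := by
    have h1 : (⋂ n : ℕ, (fun k => if k = 0 then B else M) n) = M ∩ B := by
      ext x
      simp only [Set.mem_iInter, Set.mem_inter_iff]
      constructor
      · intro h
        exact ⟨by simpa using h 1, by simpa using h 0⟩
      · rintro ⟨h1, h2⟩ n
        cases n with
        | zero => simpa using h2
        | succ k => simpa using h1
    rw [← h1]
    refine hinter _ fun n => ?_
    cases n with
    | zero => simpa using hPB
    | succ k => simpa using hPM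
  have hAMB : A ≤ᵐ[μ] (M ∩ B : Set Ω) := by
    filter_upwards [hAM, hAB] with x h1 h2 hxA
    exact ⟨h1 hxA, h2 hxA⟩
  have hcMB : c ≤ ν (M ∩ B) := sInf_le ⟨M ∩ B, ⟨hMB, hAMB⟩, rfl⟩
  have hsplit : ν (M ∩ B) + ν (M \ B) = ν M := measure_inter_add_diff M (hmeas B hPB)
  have h2 : c + ν (M \ B) ≤ c + 0 := by
    calc c + ν (M \ B) ≤ ν (M ∩ B) + ν (M \ B) := by gcongr
      _ = ν M := hsplit
      _ = c := hνM
      _ = c + 0 := (add_zero c).symm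
  have h3 : ν (M \ B) = 0 := le_antisymm ((ENNReal.add_le_add_iff_left hcnetop).1 h2) zero_le
  exact ae_le_set.2 (hμν h3)

lemma exists_isFuture [SigmaFinite μ] (T : Lp ℝ p μ →L[ℝ] Lp ℝ p μ) (A : Set Ω) :
    ∃ F, IsFuture T A F := by
  obtain ⟨M, h1, h2, h3⟩ := exists_minimal_superset (μ := μ) (Invariant T) A (fun B hB => hB.1)
    (fun s hs => Invariant.iInter hs)
    ⟨Set.univ, invariant_univ T, Filter.Eventually.of_forall fun x _ => Set.mem_univ x⟩
  exact ⟨M, h1, h2, h3⟩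

lemma exists_isPast [SigmaFinite μ] (hp' : p ≠ ∞) (T : Lp ℝ p μ →L[ℝ] Lp ℝ p μ) (A : Set Ω) :
    ∃ P, IsPast T A P := by
  have hinter : ∀ s : ℕ → Set Ω, (∀ n, CoInvariant T (s n)) → CoInvariant T (⋂ n, s n) := by
    intro s hs
    show Invariant T (⋂ n, s n)ᶜ
    rw [Set.compl_iInter]
    exact Invariant.iUnion hp' fun n => hs n
  have huniv : CoInvariant T (Set.univ : Set Ω) := by
    show Invariant T (Set.univ : Set Ω)ᶜ
    rw [Set.compl_univ]
    exact invariant_of_null MeasurableSet.empty measure_empty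
  obtain ⟨M, h1, h2, h3⟩ := exists_minimal_superset (μ := μ) (CoInvariant T) A
    (fun B hB => MeasurableSet.of_compl hB.1) hinter
    ⟨Set.univ, huniv, Filter.Eventually.of_forall fun x _ => Set.mem_univ x⟩
  exact ⟨M, h1, h2, h3⟩

lemma ae_le_hull {A FA PA : Set Ω} (hFA : IsFuture T A FA) (hPA : IsPast T A PA) :
    A ≤ᵐ[μ] (FA ∩ PA : Set Ω) := by
  filter_upwards [hFA.2.1, hPA.2.1] with x h1 h2 hx
  exact ⟨h1 hx, h2 hx⟩

lemma Invariant.restrict {A C : Set Ω} (hAm : MeasurableSet A) (hC : Invariant T C) :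
    Invariant (restrictOp T A) (C ∩ A) := by
  classical
  refine ⟨hC.1.inter hAm, fun f hf hsupp => ?_⟩
  have hfA : indicatorCLM μ p A f = f :=
    indicatorCLM_of_supported hAm (vanish_subset Set.inter_subset_right hsupp)
  have h1 : ∀ᵐ x ∂μ, x ∉ C → T f x = 0 :=
    hC.2 f hf (vanish_subset Set.inter_subset_left hsupp)
  have hro := restrictOp_coeFn T hAm f
  rw [hfA] at hro
  filter_upwards [hro, h1] with x h2 h3 hx
  rw [h2, Set.indicator_apply]
  by_cases hxA : x ∈ A
  · simp only [hxA, if_true]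
    exact h3 fun hxC => hx ⟨hxC, hxA⟩
  · simp [hxA]

lemma Atom.admissible_inter {A : Set Ω} (hA : Atom T A) {D : Set Ω} (hD : Admissible T D) :
    μ (A ∩ D) = 0 ∨ A ≤ᵐ[μ] D := by
  have h1 : Admissible T (D ∩ A) := hD.inter hA.1
  have h2 : (D ∩ A : Set Ω) ≤ᵐ[μ] A := HasSubset.Subset.eventuallyLE Set.inter_subset_right
  rcases hA.2.2 _ h1 h2 with h | h
  · left; rwa [Set.inter_comm]
  · right
    exact h.symm.le.trans (HasSubset.Subset.eventuallyLE Set.inter_subset_left)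

lemma Atom.convex {A FA PA : Set Ω} (hA : Atom T A) (hFA : IsFuture T A FA)
    (hPA : IsPast T A PA) : A =ᵐ[μ] (FA ∩ PA : Set Ω) := by
  set K := FA ∩ PA with hK
  have hAK : A ≤ᵐ[μ] K := ae_le_hull hFA hPA
  have hsplit : ∀ B : Set Ω, Invariant T B → μ (K ∩ B) = 0 ∨ K ≤ᵐ[μ] B := by
    intro B hB
    rcases hA.admissible_inter hB.admissible with h | h
    · left
      have hABc : A ≤ᵐ[μ] (Bᶜ : Set Ω) := by
        rw [ae_le_set, Set.diff_compl]
        exact h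
      have hco : CoInvariant T (Bᶜ : Set Ω) := by
        show Invariant T Bᶜᶜ
        rwa [compl_compl]
      have hPAB : PA ≤ᵐ[μ] (Bᶜ : Set Ω) := hPA.2.2 _ hco hABc
      have hle : (K ∩ B : Set Ω) ≤ᵐ[μ] (∅ : Set Ω) := by
        filter_upwards [hPAB] with x h1 hx
        exact absurd hx.2 (h1 hx.1.2)
      simpa using measure_mono_ae hle
    · right
      exact (HasSubset.Subset.eventuallyLE Set.inter_subset_left).trans (hFA.2.2 B hB h)
  rcases not_split_of_invariant hsplit A hA.1 with h | h
  · exfalso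
    have hle : A ≤ᵐ[μ] (K ∩ A : Set Ω) := by
      filter_upwards [hAK] with x h1 hx
      exact ⟨h1 hx, hx⟩
    have := measure_mono_ae hle
    rw [h] at this
    exact hA.2.1.ne' (le_antisymm this zero_le)
  · exact hAK.antisymm h

lemma G_invariant {A B FB PC : Set Ω} (hAm : MeasurableSet A)
    (hB : Invariant (restrictOp T A) B) (hBA : B ≤ᵐ[μ] A)
    (hFB : IsFuture T B FB) (hPC : IsPast T (A \ B) PC)
    (hnull : μ (FB ∩ PC ∩ Aᶜ) = 0) :
    Invariant T (B ∪ FB ∩ PCᶜ) := by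
  have hBm : MeasurableSet B := hB.1
  have hFBm : MeasurableSet FB := hFB.1.1
  have hPCm : MeasurableSet PC := MeasurableSet.of_compl hPC.1.1
  have hnullae : ∀ᵐ x ∂μ, x ∉ FB ∩ PC ∩ Aᶜ := measure_eq_zero_iff_ae_notMem.1 hnull
  refine ⟨hBm.union (hFBm.inter hPCm.compl), fun f hf hsupp => ?_⟩
  refine vanish_of_union hBm hf hsupp ?_ ?_
  · intro g hg hgs
    have h1 : ∀ᵐ x ∂μ, x ∉ FB → T g x = 0 := hFB.1.2 g hg (vanish_mono hFB.2.1 hgs)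
    have h2 : ∀ᵐ x ∂μ, x ∉ B → restrictOp T A g x = 0 := hB.2 g hg hgs
    have hgA : indicatorCLM μ p A g = g := indicatorCLM_of_supported hAm (vanish_mono hBA hgs)
    have hro := restrictOp_coeFn T hAm g
    rw [hgA] at hro
    filter_upwards [h1, h2, hro, hnullae] with x hx1 hx2 hx3 hx4 hx
    by_cases hxFB : x ∈ FB
    · by_cases hxA : x ∈ A
      · have hxB : x ∉ B := fun hh => hx (Or.inl hh)
        have := hx2 hxB
        rw [hx3, Set.indicator_of_mem hxA] at this
        exact this
      · have hxPC : x ∈ PC := by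
          by_contra hxPC
          exact hx (Or.inr ⟨hxFB, hxPC⟩)
        exact absurd ⟨⟨hxFB, hxPC⟩, hxA⟩ hx4
    · exact hx1 hxFB
  · intro g hg hgs
    have hinv : Invariant T (FB ∩ PCᶜ) := hFB.1.inter hPC.1
    have h1 : ∀ᵐ x ∂μ, x ∉ FB ∩ PCᶜ → T g x = 0 :=
      hinv.2 g hg (vanish_subset Set.diff_subset hgs)
    filter_upwards [h1] with x hx1 hx
    exact hx1 fun hmem => hx (Or.inr hmem)

lemma Atom.irreducible [SigmaFinite μ] (hp' : p ≠ ∞) {A : Set Ω} (hA : Atom T A)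
    (hAm : MeasurableSet A) : Irreducible T A := by
  refine ⟨hAm, hA.2.1, fun B hB hBA => ?_⟩
  by_cases hμB : μ B = 0
  · exact Or.inl hμB
  right
  obtain ⟨FA, hFA⟩ := exists_isFuture T A
  obtain ⟨PA, hPA⟩ := exists_isPast hp' T A
  have hAK : A =ᵐ[μ] (FA ∩ PA : Set Ω) := hA.convex hFA hPA
  obtain ⟨FB, hFB⟩ := exists_isFuture T B
  obtain ⟨PC, hPC⟩ := exists_isPast hp' T (A \ B)
  have hFBFA : FB ≤ᵐ[μ] FA := hFB.2.2 _ hFA.1 (hBA.trans hFA.2.1)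
  have hPCPA : PC ≤ᵐ[μ] PA := hPC.2.2 _ hPA.1
    ((HasSubset.Subset.eventuallyLE Set.diff_subset).trans hPA.2.1)
  have hnull : μ (FB ∩ PC ∩ Aᶜ) = 0 := by
    have hle : (FB ∩ PC ∩ Aᶜ : Set Ω) ≤ᵐ[μ] (∅ : Set Ω) := by
      filter_upwards [hFBFA, hPCPA, Filter.eventuallyEq_set.1 hAK] with x h1 h2 h3 hx
      exact hx.2 (h3.2 ⟨h1 hx.1.1, h2 hx.1.2⟩)
    simpa using measure_mono_ae hle
  have hGinv := G_invariant hAm hB hBA hFB hPC hnull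
  have hGA : ((B ∪ FB ∩ PCᶜ) ∩ A : Set Ω) =ᵐ[μ] B := by
    refine Filter.eventuallyEq_set.2 ?_
    filter_upwards [hPC.2.1, hBA] with x h1 h2
    constructor
    · rintro ⟨hG' | hG', hxA⟩
      · exact hG'
      · by_contra hxB
        exact hG'.2 (h1 ⟨hxA, hxB⟩)
    · intro hxB
      exact ⟨Or.inl hxB, h2 hxB⟩
  have hGadm : Admissible T ((B ∪ FB ∩ PCᶜ) ∩ A) := hGinv.admissible.inter hA.1
  rcases hA.2.2 _ hGadm (HasSubset.Subset.eventuallyLE Set.inter_subset_right) with h | h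
  · exfalso
    have hmeq := measure_congr hGA
    rw [h] at hmeq
    exact hμB hmeq.symm
  · exact hGA.symm.trans h

lemma Irreducible.invariant_dichotomy {A : Set Ω} (hA : Irreducible T A) :
    ∀ B : Set Ω, Invariant T B → μ (A ∩ B) = 0 ∨ A ≤ᵐ[μ] B := by
  intro B hB
  have h1 : Invariant (restrictOp T A) (B ∩ A) := Invariant.restrict hA.1 hB
  rcases hA.2.2 _ h1 (HasSubset.Subset.eventuallyLE Set.inter_subset_right) with h | h
  · left; rwa [Set.inter_comm]
  · right
    exact h.symm.le.trans (HasSubset.Subset.eventuallyLE Set.inter_subset_left)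

lemma admissible_irreducible_atom {A : Set Ω} (h1 : Admissible T A) (h2 : Irreducible T A) :
    Atom T A := by
  refine ⟨h1, h2.2.1, fun D hD hDA => ?_⟩
  rcases not_split_of_invariant h2.invariant_dichotomy D hD with h | h
  · left
    have hle : D ≤ᵐ[μ] (A ∩ D : Set Ω) := by
      filter_upwards [hDA] with x hx hxD
      exact ⟨hx hxD, hxD⟩
    have := measure_mono_ae hle
    rw [h] at this
    exact le_antisymm this zero_le
  · right
    exact hDA.antisymm h

lemma Irreducible.maximal {A A' : Set Ω} (hAad : Admissible T A) (hApos : 0 < μ A)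
    (hA' : Irreducible T A') (hle : A ≤ᵐ[μ] A') : A' =ᵐ[μ] A := by
  rcases not_split_of_invariant hA'.invariant_dichotomy A hAad with h | h
  · exfalso
    have hle2 : A ≤ᵐ[μ] (A' ∩ A : Set Ω) := by
      filter_upwards [hle] with x h1 hx
      exact ⟨h1 hx, hx⟩
    have := measure_mono_ae hle2
    rw [h] at this
    exact hApos.ne' (le_antisymm this zero_le)
  · exact h.antisymm hle

lemma Irreducible.hull [SigmaFinite μ] (hp' : p ≠ ∞) {A FA PA : Set Ω} (hA : Irreducible T A)
    (hFA : IsFuture T A FA) (hPA : IsPast T A PA) :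
    Irreducible T (FA ∩ PA) := by
  set K := FA ∩ PA with hK
  have hKm : MeasurableSet K := hFA.1.1.inter (MeasurableSet.of_compl hPA.1.1)
  have hAK : A ≤ᵐ[μ] K := ae_le_hull hFA hPA
  refine ⟨hKm, lt_of_lt_of_le hA.2.1 (measure_mono_ae hAK), fun D hD hDK => ?_⟩
  by_cases hμD : μ D = 0
  · exact Or.inl hμD
  right
  have hDm : MeasurableSet D := hD.1
  set Z := D ∪ PAᶜ with hZ
  have hZm : MeasurableSet Z := hDm.union hPA.1.1
  have hZinv : Invariant T Z := by
    refine ⟨hZm, fun f hf hsupp => ?_⟩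
    refine vanish_of_union hDm hf hsupp ?_ ?_
    · intro g hg hgs
      have hgK : indicatorCLM μ p K g = g :=
        indicatorCLM_of_supported hKm (vanish_mono hDK hgs)
      have h2 : ∀ᵐ x ∂μ, x ∉ D → restrictOp T K g x = 0 := hD.2 g hg hgs
      have hro := restrictOp_coeFn T hKm g
      rw [hgK] at hro
      have hgFA : ∀ᵐ x ∂μ, x ∉ FA → g x = 0 :=
        vanish_mono (hDK.trans (HasSubset.Subset.eventuallyLE Set.inter_subset_left)) hgs
      have h1 : ∀ᵐ x ∂μ, x ∉ FA → T g x = 0 := hFA.1.2 g hg hgFA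
      filter_upwards [h1, h2, hro] with x hx1 hx2 hx3 hx
      have hxD : x ∉ D := fun hh => hx (Or.inl hh)
      have hxPA : x ∈ PA := by
        by_contra hh
        exact hx (Or.inr hh)
      by_cases hxFA : x ∈ FA
      · have := hx2 hxD
        have hxK : x ∈ K := ⟨hxFA, hxPA⟩
        rw [hx3, Set.indicator_of_mem hxK] at this
        exact this
      · exact hx1 hxFA
    · intro g hg hgs
      have hinv : Invariant T (PAᶜ : Set Ω) := hPA.1
      have h1 : ∀ᵐ x ∂μ, x ∉ PAᶜ → T g x = 0 :=
        hinv.2 g hg (vanish_subset Set.diff_subset hgs)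
      filter_upwards [h1] with x hx1 hx
      exact hx1 fun hmem => hx (Or.inr hmem)
  have hDA_pos : μ (D ∩ A) ≠ 0 := by
    intro h0
    have hco : CoInvariant T (Zᶜ : Set Ω) := by
      show Invariant T Zᶜᶜ
      rwa [compl_compl]
    have hADc : A ≤ᵐ[μ] (Dᶜ : Set Ω) := by
      rw [ae_le_set, Set.diff_compl, Set.inter_comm]
      exact h0
    have hAZc : A ≤ᵐ[μ] (Zᶜ : Set Ω) := by
      filter_upwards [hADc, hPA.2.1] with x h1 h2 hx
      have : ¬(x ∈ D ∨ x ∈ PAᶜ) := not_or.2 ⟨h1 hx, fun hPAc => hPAc (h2 hx)⟩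
      exact this
    have hPAZc : PA ≤ᵐ[μ] (Zᶜ : Set Ω) := hPA.2.2 _ hco hAZc
    have hDnull : D ≤ᵐ[μ] (∅ : Set Ω) := by
      filter_upwards [hDK, hPAZc] with x h1 h2 hxD
      exact absurd (Or.inl hxD : x ∈ Z) (h2 (h1 hxD).2)
    exact hμD (by simpa using measure_mono_ae hDnull)
  have hDAinv : Invariant (restrictOp T A) (D ∩ A) := by
    classical
    refine ⟨hDm.inter hA.1, fun f hf hsupp => ?_⟩
    have hfA : indicatorCLM μ p A f = f :=
      indicatorCLM_of_supported hA.1 (vanish_subset Set.inter_subset_right hsupp)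
    have hfD : ∀ᵐ x ∂μ, x ∉ D → f x = 0 := vanish_subset Set.inter_subset_left hsupp
    have hfK : indicatorCLM μ p K f = f :=
      indicatorCLM_of_supported hKm (vanish_mono hDK hfD)
    have h2 : ∀ᵐ x ∂μ, x ∉ D → restrictOp T K f x = 0 := hD.2 f hf hfD
    have hro := restrictOp_coeFn T hKm f
    rw [hfK] at hro
    have hroA := restrictOp_coeFn T hA.1 f
    rw [hfA] at hroA
    filter_upwards [h2, hro, hroA, hAK] with x hx2 hx3 hx4 hx5 hx
    rw [hx4, Set.indicator_apply]
    by_cases hxA : x ∈ A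
    · simp only [hxA, if_true]
      have hxD : x ∉ D := fun hh => hx ⟨hh, hxA⟩
      have := hx2 hxD
      have hxK : x ∈ K := hx5 hxA
      rw [hx3, Set.indicator_of_mem hxK] at this
      exact this
    · simp [hxA]
  rcases hA.2.2 _ hDAinv (HasSubset.Subset.eventuallyLE Set.inter_subset_right) with h | h
  · exact absurd h hDA_pos
  · have hAD : A ≤ᵐ[μ] D := h.symm.le.trans (HasSubset.Subset.eventuallyLE Set.inter_subset_left)
    have hAZ : A ≤ᵐ[μ] Z := hAD.trans (HasSubset.Subset.eventuallyLE Set.subset_union_left)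
    have hFAZ : FA ≤ᵐ[μ] Z := hFA.2.2 Z hZinv hAZ
    have hKD : K ≤ᵐ[μ] D := by
      filter_upwards [hFAZ] with x h1 hxK
      rcases h1 hxK.1 with h' | h'
      · exact h'
      · exact absurd hxK.2 h'
    exact hDK.antisymm hKD

lemma Convexe.admissible [SigmaFinite μ] {A : Set Ω} (hA : Convexe T A) : Admissible T A := by
  obtain ⟨hAm, FA, PA, hFA, hPA, hconv⟩ := hA
  have h1 : Admissible T (FA ∩ PA) := hFA.1.admissible.inter hPA.1.admissible
  exact admissible_congr h1 hAm hconv.symm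

lemma hull_convexe [SigmaFinite μ] (hp' : p ≠ ∞) {B FB PB : Set Ω} (hFB : IsFuture T B FB)
    (hPB : IsPast T B PB) : Convexe T (FB ∩ PB) := by
  have hm : MeasurableSet (FB ∩ PB) := hFB.1.1.inter (MeasurableSet.of_compl hPB.1.1)
  obtain ⟨F2, hF2⟩ := exists_isFuture T (FB ∩ PB)
  obtain ⟨P2, hP2⟩ := exists_isPast hp' T (FB ∩ PB)
  refine ⟨hm, F2, P2, hF2, hP2, ?_⟩
  have h1 : F2 ≤ᵐ[μ] FB := hF2.2.2 _ hFB.1 (HasSubset.Subset.eventuallyLE Set.inter_subset_left)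
  have h2 : P2 ≤ᵐ[μ] PB := hP2.2.2 _ hPB.1 (HasSubset.Subset.eventuallyLE Set.inter_subset_right)
  refine EventuallyLE.antisymm (ae_le_hull hF2 hP2) ?_
  filter_upwards [h1, h2] with x a b hx
  exact ⟨a hx.1, b hx.2⟩

end AuxLemmas

theorem statement0 [SigmaFinite μ] (hμ : μ Set.univ ≠ 0) [Fact (1 ≤ p)]
    (hp : 1 < p) (hp' : p ≠ ∞)
    (T : Lp ℝ p μ →L[ℝ] Lp ℝ p μ) (hT : IsPositiveOp T)
    (A : Set Ω) (hA : MeasurableSet A) :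
    List.TFAE
      [ Atom T A,
        Convexe T A ∧ 0 < μ A ∧
          ∀ B : Set Ω, Convexe T B → B ≤ᵐ[μ] A → μ B = 0 ∨ B =ᵐ[μ] A,
        Admissible T A ∧ Irreducible T A,
        Irreducible T A ∧ ∀ A' : Set Ω, Irreducible T A' → A ≤ᵐ[μ] A' → A' =ᵐ[μ] A ] := by
  tfae_have 1 → 3 := fun h => ⟨h.1, Atom.irreducible hp' h hA⟩
  tfae_have 3 → 1 := fun h => admissible_irreducible_atom h.1 h.2
  tfae_have 3 → 4 := fun h =>
    ⟨h.2, fun A' hA' hle => Irreducible.maximal h.1 h.2.2.1 hA' hle⟩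
  tfae_have 4 → 3 := fun h => by
    obtain ⟨h1, hmax⟩ := h
    obtain ⟨FA, hFA⟩ := exists_isFuture T A
    obtain ⟨PA, hPA⟩ := exists_isPast hp' T A
    have hK := Irreducible.hull hp' h1 hFA hPA
    have hKA : (FA ∩ PA : Set Ω) =ᵐ[μ] A := hmax _ hK (ae_le_hull hFA hPA)
    exact ⟨admissible_congr (hFA.1.admissible.inter hPA.1.admissible) hA hKA, h1⟩
  tfae_have 1 → 2 := fun h => by
    obtain ⟨FA, hFA⟩ := exists_isFuture T A
    obtain ⟨PA, hPA⟩ := exists_isPast hp' T A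
    exact ⟨⟨hA, FA, PA, hFA, hPA, h.convex hFA hPA⟩, h.2.1,
      fun B hB hBA => h.2.2 B hB.admissible hBA⟩
  tfae_have 2 → 3 := fun h => by
    obtain ⟨hconv, hpos, hmin⟩ := h
    refine ⟨hconv.admissible, hA, hpos, fun B hB hBA => ?_⟩
    by_cases hμB : μ B = 0
    · exact Or.inl hμB
    right
    obtain ⟨hAm, FA, PA, hFA, hPA, hAK⟩ := hconv
    by_cases hμC : μ (A \ B) = 0
    · exact hBA.antisymm (ae_le_set.2 hμC)
    exfalso
    obtain ⟨FB, hFB⟩ := exists_isFuture T B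
    obtain ⟨PB, hPB⟩ := exists_isPast hp' T B
    obtain ⟨FC, hFC⟩ := exists_isFuture T (A \ B)
    obtain ⟨PC, hPC⟩ := exists_isPast hp' T (A \ B)
    have hCA : ((A \ B : Set Ω)) ≤ᵐ[μ] A := HasSubset.Subset.eventuallyLE Set.diff_subset
    have hFBFA : FB ≤ᵐ[μ] FA := hFB.2.2 _ hFA.1 (hBA.trans hFA.2.1)
    have hPBPA : PB ≤ᵐ[μ] PA := hPB.2.2 _ hPA.1 (hBA.trans hPA.2.1)
    have hFCFA : FC ≤ᵐ[μ] FA := hFC.2.2 _ hFA.1 (hCA.trans hFA.2.1)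
    have hPCPA : PC ≤ᵐ[μ] PA := hPC.2.2 _ hPA.1 (hCA.trans hPA.2.1)
    have hHBA : (FB ∩ PB : Set Ω) ≤ᵐ[μ] A := by
      filter_upwards [hFBFA, hPBPA, Filter.eventuallyEq_set.1 hAK] with x h1 h2 h3 hx
      exact h3.2 ⟨h1 hx.1, h2 hx.2⟩
    have hHCA : (FC ∩ PC : Set Ω) ≤ᵐ[μ] A := by
      filter_upwards [hFCFA, hPCPA, Filter.eventuallyEq_set.1 hAK] with x h1 h2 h3 hx
      exact h3.2 ⟨h1 hx.1, h2 hx.2⟩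
    have hHB : (FB ∩ PB : Set Ω) =ᵐ[μ] A := by
      rcases hmin _ (hull_convexe hp' hFB hPB) hHBA with h' | h'
      · exfalso
        have hh := measure_mono_ae (ae_le_hull hFB hPB)
        rw [h'] at hh
        exact hμB (le_antisymm hh zero_le)
      · exact h'
    have hHC : (FC ∩ PC : Set Ω) =ᵐ[μ] A := by
      rcases hmin _ (hull_convexe hp' hFC hPC) hHCA with h' | h'
      · exfalso
        have hh := measure_mono_ae (ae_le_hull hFC hPC)
        rw [h'] at hh
        exact hμC (le_antisymm hh zero_le)
      · exact h'
    have hCFB : ((A \ B : Set Ω)) ≤ᵐ[μ] FB := by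
      filter_upwards [hCA, Filter.eventuallyEq_set.1 hHB] with x h1 h2 hx
      exact (h2.2 (h1 hx)).1
    have hBPC : (B : Set Ω) ≤ᵐ[μ] PC := by
      filter_upwards [hBA, Filter.eventuallyEq_set.1 hHC] with x h1 h2 hx
      exact (h2.2 (h1 hx)).2
    have hnull : μ (FB ∩ PC ∩ Aᶜ) = 0 := by
      have hle : (FB ∩ PC ∩ Aᶜ : Set Ω) ≤ᵐ[μ] (∅ : Set Ω) := by
        filter_upwards [hFBFA, hPCPA, Filter.eventuallyEq_set.1 hAK] with x h1 h2 h3 hx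
        exact hx.2 (h3.2 ⟨h1 hx.1.1, h2 hx.1.2⟩)
      simpa using measure_mono_ae hle
    have hGinv := G_invariant hAm hB hBA hFB hPC hnull
    have hFBG : FB ≤ᵐ[μ] (B ∪ FB ∩ PCᶜ : Set Ω) := hFB.2.2 _ hGinv
      (HasSubset.Subset.eventuallyLE Set.subset_union_left)
    have hCnull : ((A \ B : Set Ω)) ≤ᵐ[μ] (∅ : Set Ω) := by
      filter_upwards [hCFB, hFBG, hPC.2.1] with x h1 h2 h3 hx
      rcases h2 (h1 hx) with h' | h'
      · exact absurd h' hx.2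
      · exact absurd (h3 hx) h'.2
    exact hμC (by simpa using measure_mono_ae hCnull)
  tfae_finish

end PaperAtoms
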